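/- For a prime p and integers 0 ≤ α₁ ≤ α₂, the number of subgroups of ℤ_{p^α₁} × ℤ_{p^α₂} equals [(α₂−α₁+1)p^{α₁+2} − (α₂−α₁−1)p^{α₁+1} − (α₁+α₂+3)p + (α₁+α₂+1)] / (p−1)². -/

import Mathlib

open AddSubgroup

section Aux13

lemma mem_zmult_iff13 {M k : ℕ} [NeZero M] (hk : k ∣ M) (x : ZMod M) :
    x ∈ zmultiples ((k : ZMod M)) ↔ k ∣ x.val := by
  constructor
  · rintro ⟨n, rfl⟩
    have h2 : ((n • (k : ZMod M)).val : ZMod k) = ZMod.castHom hk (ZMod k) (n • (k : ZMod M)) := by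
      simp [ZMod.natCast_val, ZMod.castHom_apply]
    have h3 : ZMod.castHom hk (ZMod k) (n • (k : ZMod M)) = 0 := by
      rw [map_zsmul]
      simp
    exact (ZMod.natCast_eq_zero_iff _ _).1 (h2.trans h3)
  · rintro ⟨d, hd⟩
    refine ⟨d, ?_⟩
    have hx : x = ((x.val : ℕ) : ZMod M) := by simp [ZMod.natCast_val, ZMod.cast_id]
    show (d : ℤ) • ((k : ℕ) : ZMod M) = x
    rw [hx, hd, zsmul_eq_mul]
    push_cast
    ring

lemma dvd_mem_zmult13 {M k N : ℕ} (h : k ∣ N) : ((N : ZMod M)) ∈ zmultiples ((k : ZMod M)) := by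
  obtain ⟨d, rfl⟩ := h
  refine ⟨d, ?_⟩
  show (d : ℤ) • ((k : ℕ) : ZMod M) = _
  rw [zsmul_eq_mul]; push_cast; ring

lemma subgroup_zmod13 (M : ℕ) [NeZero M] (H : AddSubgroup (ZMod M)) :
    ∃ d : ℕ, d ∣ M ∧ H = zmultiples ((d : ZMod M)) := by
  have hsurj : Function.Surjective ⇑(Int.castAddHom (ZMod M)) := ZMod.intCast_surjective
  obtain ⟨g, hg⟩ := Int.subgroup_cyclic (H.comap (Int.castAddHom (ZMod M)))
  have hH : H = (zmultiples ((g : ZMod M))) := by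
    have := AddSubgroup.map_comap_eq_self_of_surjective hsurj H
    rw [← this, hg, ← zmultiples_eq_closure, AddMonoidHom.map_zmultiples]
    rfl
  refine ⟨Int.gcd g M, ?_, ?_⟩
  · have : (Int.gcd g (M:ℤ) : ℤ) ∣ (M:ℤ) := Int.gcd_dvd_right _ _
    exact_mod_cast Int.ofNat_dvd.1 (by exact_mod_cast this)
  · rw [hH]
    apply le_antisymm
    · rw [zmultiples_le]
      obtain ⟨e, he⟩ := (Int.gcd_dvd_left _ _ : (Int.gcd g (M:ℤ) : ℤ) ∣ g)
      refine ⟨e, ?_⟩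
      show (e : ℤ) • ((Int.gcd g M : ℕ) : ZMod M) = ((g : ℤ) : ZMod M)
      rw [zsmul_eq_mul]
      have : ((g : ℤ) : ZMod M) = (((Int.gcd g M : ℤ) * e : ℤ) : ZMod M) :=
        congrArg (Int.cast : ℤ → ZMod M) he
      rw [this]
      push_cast
      ring
    · rw [zmultiples_le]
      have hbez : (Int.gcd g M : ℤ) = g * Int.gcdA g M + M * Int.gcdB g M := Int.gcd_eq_gcd_ab g M
      refine ⟨Int.gcdA g M, ?_⟩
      show (Int.gcdA g M) • ((g : ℤ) : ZMod M) = ((Int.gcd g M : ℕ) : ZMod M)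
      rw [zsmul_eq_mul]
      have : ((Int.gcd g M : ℕ) : ZMod M) = (((g * Int.gcdA g M + M * Int.gcdB g M : ℤ)) : ZMod M) := by
        exact_mod_cast congrArg (Int.cast : ℤ → ZMod M) hbez
      rw [this]
      push_cast
      simp
      ring

lemma subgroup_zmod_pow {p : ℕ} (hp : p.Prime) (n : ℕ) (H : AddSubgroup (ZMod (p^n))) :
    ∃ s ≤ n, H = zmultiples (((p^s : ℕ) : ZMod (p^n))) := by
  haveI : NeZero (p^n) := ⟨pow_ne_zero n hp.ne_zero⟩
  obtain ⟨d, hd, hH⟩ := subgroup_zmod13 (p^n) H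
  obtain ⟨s, hs, rfl⟩ := (Nat.dvd_prime_pow hp).1 hd
  exact ⟨s, hs, hH⟩

lemma zmult_pow_card13 {p : ℕ} (hp : p.Prime) {n s : ℕ} (hs : s ≤ n) :
    Nat.card (zmultiples (((p^s : ℕ) : ZMod (p^n)))) = p^(n-s) := by
  rw [Nat.card_zmultiples, ZMod.addOrderOf_coe _ (pow_ne_zero n hp.ne_zero),
    Nat.gcd_eq_right (pow_dvd_pow p hs), Nat.pow_div hs hp.pos]

lemma zmult_pow_inj13 {p : ℕ} (hp : p.Prime) {n s s' : ℕ} (hs : s ≤ n) (hs' : s' ≤ n)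
    (h : zmultiples (((p^s : ℕ) : ZMod (p^n))) = zmultiples (((p^s' : ℕ) : ZMod (p^n)))) :
    s = s' := by
  have := (zmult_pow_card13 hp hs).symm.trans (h ▸ zmult_pow_card13 hp hs')
  have := Nat.pow_right_injective hp.two_le this
  omega

lemma card_count13 (M D k : ℕ) [NeZero M] (hT : D * k ≤ M) (hD0 : 0 < D) :
    Nat.card {c : ZMod M // c.val < D * k ∧ D ∣ c.val} = k := by
  have hMpos : 0 < M := Nat.pos_of_ne_zero (NeZero.ne M)
  have e : {c : ZMod M // c.val < D * k ∧ D ∣ c.val} ≃ Fin k := by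
    refine ⟨fun c => ⟨c.1.val / D, ?_⟩, fun u => ⟨((D * (u : ℕ) : ℕ) : ZMod M), ?_, ?_⟩, ?_, ?_⟩
    · obtain ⟨c, hc1, hc2⟩ := c
      show c.val / D < k
      exact Nat.div_lt_of_lt_mul (by omega)
    · have : D * (u : ℕ) < M := lt_of_lt_of_le (mul_lt_mul_of_pos_left u.isLt hD0) hT
      rw [ZMod.val_cast_of_lt this]
      exact mul_lt_mul_of_pos_left u.isLt hD0
    · have : D * (u : ℕ) < M := lt_of_lt_of_le (mul_lt_mul_of_pos_left u.isLt hD0) hT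
      rw [ZMod.val_cast_of_lt this]
      exact ⟨u, rfl⟩
    · rintro ⟨c, hc1, hc2⟩
      apply Subtype.ext
      simp only
      have hlt : D * (c.val / D) < M := by
        have : D * (c.val / D) ≤ c.val := Nat.mul_div_le _ _
        exact lt_of_le_of_lt this (ZMod.val_lt c)
      have : D * (c.val / D) = c.val := by
        obtain ⟨e, he⟩ := hc2
        rw [he, Nat.mul_div_cancel_left _ hD0]
      rw [this]
      simp [ZMod.natCast_val, ZMod.cast_id]
    · intro u
      apply Fin.ext
      simp only
      have : D * (u : ℕ) < M := lt_of_lt_of_le (mul_lt_mul_of_pos_left u.isLt hD0) hT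
      rw [ZMod.val_cast_of_lt this, Nat.mul_div_cancel_left _ hD0]
  rw [Nat.card_congr e, Nat.card_eq_fintype_card, Fintype.card_fin]

section
variable {p : ℕ} (a b : ℕ)

def Phi13 (s t : ℕ) (c : ZMod (p^b)) : AddSubgroup (ZMod (p^a) × ZMod (p^b)) :=
  closure {(((p^s : ℕ) : ZMod (p^a)), c), (0, ((p^t : ℕ) : ZMod (p^b)))}

lemma fstzero13 (hp : p.Prime) {s : ℕ} (hs : s ≤ a) (m : ℤ) :
    m • (((p^s : ℕ) : ZMod (p^a))) = 0 ↔ ((p^(a-s) : ℕ) : ℤ) ∣ m := by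
  have h1 : m • (((p^s : ℕ) : ZMod (p^a))) = ((m * (p^s : ℕ) : ℤ) : ZMod (p^a)) := by
    rw [zsmul_eq_mul]; push_cast; ring
  rw [h1, ZMod.intCast_zmod_eq_zero_iff_dvd]
  constructor
  · intro hdvd
    have h2 : ((p^(a-s) * p^s : ℕ) : ℤ) ∣ m * (p^s : ℕ) := by
      rwa [← pow_add, Nat.sub_add_cancel hs]
    have hps : ((p^s : ℕ) : ℤ) ≠ 0 := by
      exact_mod_cast (pow_ne_zero s hp.ne_zero)
    rw [Nat.cast_mul] at h2
    exact (mul_dvd_mul_iff_right hps).1 h2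
  · intro hdvd
    calc ((p^a : ℕ) : ℤ) = (p^(a-s) : ℕ) * (p^s : ℕ) := by
          push_cast; rw [← pow_add]; congr 1; omega
      _ ∣ m * (p^s : ℕ) := mul_dvd_mul_right hdvd _

-- admissibility: p^(t - min t (a-s)) ∣ c.val
lemma mc_mem13 (hp : p.Prime) {s t : ℕ} (hs : s ≤ a) (ht : t ≤ b)
    {c : ZMod (p^b)} (hc : p^(t - min t (a-s)) ∣ c.val)
    {m : ℤ} (hm : ((p^(a-s) : ℕ) : ℤ) ∣ m) :
    m • c ∈ zmultiples (((p^t : ℕ) : ZMod (p^b))) := by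
  haveI : NeZero (p^b) := ⟨pow_ne_zero b hp.ne_zero⟩
  obtain ⟨m', rfl⟩ := hm
  have h1 : (((p^(a-s) : ℕ) : ℤ) * m') • c = m' • (((p^(a-s) * c.val : ℕ) : ZMod (p^b))) := by
    have hc' : c = ((c.val : ℕ) : ZMod (p^b)) := by simp [ZMod.natCast_val, ZMod.cast_id]
    rw [mul_comm, mul_smul]
    congr 1
    rw [zsmul_eq_mul]
    conv_lhs => rw [hc']
    push_cast
    ring
  rw [h1]
  apply zsmul_mem
  apply dvd_mem_zmult13
  calc p^t ∣ p^(a-s) * p^(t - min t (a-s)) := by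
        rw [← pow_add]; apply pow_dvd_pow; omega
    _ ∣ p^(a-s) * c.val := mul_dvd_mul_left _ hc

lemma mem_Phi_iff {s t : ℕ} {c : ZMod (p^b)} (x : ZMod (p^a) × ZMod (p^b)) :
    x ∈ Phi13 a b s t c ↔ ∃ m n : ℤ,
      m • ((((p^s : ℕ) : ZMod (p^a)), c)) + n • (((0 : ZMod (p^a)), ((p^t : ℕ) : ZMod (p^b)))) = x :=
  AddSubgroup.mem_closure_pair

lemma map_fst_Phi {s t : ℕ} (c : ZMod (p^b)) :
    (Phi13 a b s t c).map (AddMonoidHom.fst _ _) = zmultiples (((p^s : ℕ) : ZMod (p^a))) := by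
  rw [Phi13, AddMonoidHom.map_closure, Set.image_pair]
  simp only [AddMonoidHom.coe_fst]
  rw [zmultiples_eq_closure]
  apply le_antisymm
  · rw [closure_le]
    intro x hx
    rcases hx with rfl | rfl
    · exact subset_closure rfl
    · exact zero_mem _
  · exact closure_mono (by intro x hx; rcases hx with rfl; left; rfl)

lemma comap_inr_Phi (hp : p.Prime) {s t : ℕ} (hs : s ≤ a) (ht : t ≤ b)
    {c : ZMod (p^b)} (hc : p^(t - min t (a-s)) ∣ c.val) :
    (Phi13 a b s t c).comap (AddMonoidHom.inr (ZMod (p^a)) (ZMod (p^b)))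
      = zmultiples (((p^t : ℕ) : ZMod (p^b))) := by
  apply le_antisymm
  · intro y hy
    simp only [mem_comap, AddMonoidHom.inr_apply] at hy
    rw [mem_Phi_iff] at hy
    obtain ⟨m, n, hmn⟩ := hy
    have h1 : m • (((p^s : ℕ) : ZMod (p^a))) = 0 := by
      have := congrArg Prod.fst hmn
      simpa using this
    have hm := (fstzero13 a hp hs m).1 h1
    have h2 : m • c + n • (((p^t : ℕ) : ZMod (p^b))) = y := by
      have := congrArg Prod.snd hmn
      simpa using this
    rw [← h2]
    exact add_mem (mc_mem13 a b hp hs ht hc hm) (zsmul_mem (mem_zmultiples _) n)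
  · rw [zmultiples_le]
    simp only [mem_comap, AddMonoidHom.inr_apply]
    exact subset_closure (by right; rfl)

lemma Phi_inj (hp : p.Prime) {s s' t t' : ℕ} (hs : s ≤ a) (hs' : s' ≤ a) (ht : t ≤ b) (ht' : t' ≤ b)
    {c c' : ZMod (p^b)} (hc : p^(t - min t (a-s)) ∣ c.val) (hc' : p^(t' - min t' (a-s')) ∣ c'.val)
    (hv : c.val < p^t) (hv' : c'.val < p^t')
    (heq : Phi13 a b s t c = Phi13 a b s' t' c') : s = s' ∧ t = t' ∧ c = c' := by
  haveI : NeZero (p^b) := ⟨pow_ne_zero b hp.ne_zero⟩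
  have hss : s = s' := by
    apply zmult_pow_inj13 hp hs hs'
    rw [← map_fst_Phi a b (p := p) (t := t) c, ← map_fst_Phi a b (p := p) (t := t') c', heq]
  subst hss
  have htt : t = t' := by
    apply zmult_pow_inj13 hp ht ht'
    rw [← comap_inr_Phi a b hp hs ht hc, ← comap_inr_Phi a b hp hs ht' hc', heq]
  subst htt
  refine ⟨rfl, rfl, ?_⟩
  -- (p^s, c) ∈ Phi13 a b s t c'
  have hmem : ((((p^s : ℕ) : ZMod (p^a)), c)) ∈ Phi13 a b s t c' := by
    rw [← heq]
    exact subset_closure (by left; rfl)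
  rw [mem_Phi_iff] at hmem
  obtain ⟨m, n, hmn⟩ := hmem
  have h1 : (m - 1) • (((p^s : ℕ) : ZMod (p^a))) = 0 := by
    have := congrArg Prod.fst hmn
    simp only [Prod.fst_add, Prod.smul_fst, Prod.smul_snd] at this
    rw [sub_smul, one_smul]
    simp only [smul_zero, add_zero] at this
    rw [this]; abel
  have hm := (fstzero13 a hp hs (m-1)).1 h1
  have h2 : m • c' + n • (((p^t : ℕ) : ZMod (p^b))) = c := by
    have := congrArg Prod.snd hmn
    simpa using this
  have hd : c - c' ∈ zmultiples (((p^t : ℕ) : ZMod (p^b))) := by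
    have : c - c' = (m - 1) • c' + n • (((p^t : ℕ) : ZMod (p^b))) := by
      rw [sub_smul, one_smul, ← h2]; abel
    rw [this]
    exact add_mem (mc_mem13 a b hp hs ht hc' hm) (zsmul_mem (mem_zmultiples _) n)
  have hdvd : p^t ∣ (c - c').val := (mem_zmult_iff13 (pow_dvd_pow p ht) _).1 hd
  -- now conclude via val mod
  have hc2 : c = c' + (c - c') := by ring
  have hval : c.val % p^t = c'.val % p^t := by
    conv_lhs => rw [hc2]
    rw [ZMod.val_add, Nat.mod_mod_of_dvd _ (pow_dvd_pow p ht), Nat.add_mod]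
    have h0 : (c - c').val % p^t = 0 := Nat.mod_eq_zero_of_dvd hdvd
    simp [h0]
  have : c.val = c'.val := by
    rwa [Nat.mod_eq_of_lt hv, Nat.mod_eq_of_lt hv'] at hval
  exact ZMod.val_injective _ this

lemma Phi_surj (hp : p.Prime) (H : AddSubgroup (ZMod (p^a) × ZMod (p^b))) :
    ∃ s, s ≤ a ∧ ∃ t, t ≤ b ∧ ∃ c : ZMod (p^b),
      (c.val < p^t ∧ p^(t - min t (a-s)) ∣ c.val) ∧ Phi13 a b s t c = H := by
  haveI : NeZero (p^a) := ⟨pow_ne_zero a hp.ne_zero⟩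
  haveI : NeZero (p^b) := ⟨pow_ne_zero b hp.ne_zero⟩
  obtain ⟨s, hs, hA⟩ := subgroup_zmod_pow hp a (H.map (AddMonoidHom.fst _ _))
  obtain ⟨t, ht, hT⟩ := subgroup_zmod_pow hp b (H.comap (AddMonoidHom.inr _ _))
  have hpt : 0 < p^t := Nat.pow_pos (n := t) hp.pos
  -- get element with first coordinate p^s
  have hmem : (((p^s : ℕ) : ZMod (p^a))) ∈ H.map (AddMonoidHom.fst _ _) := by
    rw [hA]; exact mem_zmultiples _
  rw [AddSubgroup.mem_map] at hmem
  obtain ⟨⟨x1, x2⟩, hxH, hx1⟩ := hmem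
  simp only [AddMonoidHom.coe_fst] at hx1
  subst hx1
  set c : ZMod (p^b) := ((x2.val % p^t : ℕ) : ZMod (p^b)) with hcdef
  have hcval : c.val = x2.val % p^t := by
    apply ZMod.val_cast_of_lt
    calc x2.val % p^t < p^t := Nat.mod_lt _ hpt
      _ ≤ p^b := Nat.pow_le_pow_right hp.pos ht
  have hvlt : c.val < p^t := by rw [hcval]; exact Nat.mod_lt _ hpt
  -- x2 - c is a multiple of p^t, and in T
  have hdiff : x2 - c = (((p^t * (x2.val / p^t) : ℕ) : ZMod (p^b))) := by
    have hx2 : x2 = ((x2.val : ℕ) : ZMod (p^b)) := by simp [ZMod.natCast_val, ZMod.cast_id]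
    conv_lhs => rw [hx2, hcdef]
    rw [sub_eq_iff_eq_add, ← Nat.cast_add]
    exact congrArg _ (Nat.div_add_mod _ _).symm
  have hdiffT : ((0 : ZMod (p^a)), x2 - c) ∈ H := by
    have : x2 - c ∈ H.comap (AddMonoidHom.inr _ _) := by
      rw [hT, hdiff]
      exact dvd_mem_zmult13 ⟨_, rfl⟩
    simpa using this
  have hg1 : ((((p^s : ℕ) : ZMod (p^a))), c) ∈ H := by
    have := H.sub_mem hxH hdiffT
    simpa using this
  -- admissibility
  have hadm : p^(t - min t (a-s)) ∣ c.val := by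
    rcases le_or_gt t (a-s) with hts | hts
    · simp [Nat.min_eq_left hts]
    · have hsm : ((p^(a-s) : ℕ) : ℤ) • ((((p^s : ℕ) : ZMod (p^a))), c) ∈ H :=
        zsmul_mem hg1 _
      have hfst : ((p^(a-s) : ℕ) : ℤ) • (((p^s : ℕ) : ZMod (p^a))) = 0 :=
        (fstzero13 a hp hs _).2 dvd_rfl
      have hsnd : ((p^(a-s) : ℕ) : ℤ) • c ∈ H.comap (AddMonoidHom.inr _ _) := by
        simp only [mem_comap, AddMonoidHom.inr_apply]
        have h4 : ((p^(a-s) : ℕ) : ℤ) • ((((p^s : ℕ) : ZMod (p^a))), c) =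
            (((0 : ZMod (p^a))), ((p^(a-s) : ℕ) : ℤ) • c) := by
          rw [Prod.ext_iff]
          exact ⟨hfst, rfl⟩
        rw [← h4]; exact hsm
      rw [hT] at hsnd
      have hsmc : ((p^(a-s) : ℕ) : ℤ) • c = (((p^(a-s) * c.val : ℕ) : ZMod (p^b))) := by
        have hc' : c = ((c.val : ℕ) : ZMod (p^b)) := by simp [ZMod.natCast_val, ZMod.cast_id]
        rw [zsmul_eq_mul]
        conv_lhs => rw [hc']
        push_cast
        ring
      rw [hsmc, mem_zmult_iff13 (pow_dvd_pow p ht)] at hsnd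
      rw [ZMod.val_natCast] at hsnd
      rw [Nat.dvd_mod_iff (pow_dvd_pow p ht)] at hsnd
      -- p^t ∣ p^(a-s) * c.val ; a-s < t
      have hmin : t - min t (a-s) = t - (a-s) := by rw [Nat.min_eq_right (le_of_lt hts)]
      rw [hmin]
      have h3 : p^(a-s) * p^(t-(a-s)) ∣ p^(a-s) * c.val := by
        rw [← pow_add]
        have : a - s + (t - (a-s)) = t := by omega
        rw [this]; exact hsnd
      exact (mul_dvd_mul_iff_left (pow_ne_zero (a-s) hp.ne_zero)).1 h3
  refine ⟨s, hs, t, ht, c, ⟨hvlt, hadm⟩, ?_⟩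
  apply le_antisymm
  · rw [Phi13, closure_le]
    intro x hx
    rcases hx with rfl | rfl
    · exact hg1
    · have : (((p^t : ℕ) : ZMod (p^b))) ∈ H.comap (AddMonoidHom.inr _ _) := by
        rw [hT]; exact mem_zmultiples _
      simpa using this
  · intro x hxH2
    obtain ⟨x1, x2'⟩ := x
    have hx1A : x1 ∈ H.map (AddMonoidHom.fst _ _) := ⟨(x1, x2'), hxH2, rfl⟩
    rw [hA] at hx1A
    obtain ⟨m, hm⟩ := hx1A
    have hrem : ((0 : ZMod (p^a)), x2' - m • c) ∈ H := by
      have := H.sub_mem hxH2 (zsmul_mem hg1 m)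
      have heq : (x1, x2') - m • ((((p^s : ℕ) : ZMod (p^a))), c)
          = ((0 : ZMod (p^a)), x2' - m • c) := by
        rw [Prod.ext_iff]
        constructor
        · simp [← hm]
        · simp
      rwa [heq] at this
    have : x2' - m • c ∈ H.comap (AddMonoidHom.inr _ _) := by simpa using hrem
    rw [hT] at this
    obtain ⟨n, hn⟩ := this
    rw [mem_Phi_iff]
    refine ⟨m, n, ?_⟩
    rw [Prod.ext_iff]
    constructor
    · simpa using hm
    · simp only [Prod.snd_add, Prod.smul_snd]
      simp only [Prod.smul_snd] at hn ⊢
      rw [hn]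
      abel

theorem count_subgroups13 (hp : p.Prime) :
    Nat.card (AddSubgroup (ZMod (p^a) × ZMod (p^b))) =
      ∑ s ∈ Finset.range (a+1), ∑ t ∈ Finset.range (b+1), p^(min t (a-s)) := by
  haveI : NeZero (p^a) := ⟨pow_ne_zero a hp.ne_zero⟩
  haveI : NeZero (p^b) := ⟨pow_ne_zero b hp.ne_zero⟩
  set Idx := Σ s : Fin (a+1), Σ t : Fin (b+1),
    {c : ZMod (p^b) // c.val < p^(t:ℕ) ∧ p^((t:ℕ) - min (t:ℕ) (a-(s:ℕ))) ∣ c.val} with hIdx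
  have hbij : Function.Bijective
      (fun x : Idx => Phi13 a b (x.1 : ℕ) (x.2.1 : ℕ) x.2.2.1) := by
    constructor
    · rintro ⟨s, t, c, hc1, hc2⟩ ⟨s', t', c', hc1', hc2'⟩ h
      simp only at h
      obtain ⟨hss, htt, hcc⟩ := Phi_inj a b hp
        (Nat.lt_succ_iff.1 s.isLt) (Nat.lt_succ_iff.1 s'.isLt)
        (Nat.lt_succ_iff.1 t.isLt) (Nat.lt_succ_iff.1 t'.isLt)
        hc2 hc2' hc1 hc1' h
      have hs2 : s = s' := Fin.ext hss
      subst hs2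
      have ht2 : t = t' := Fin.ext htt
      subst ht2
      subst hcc
      rfl
    · intro H
      obtain ⟨s, hs, t, ht, c, hc, hPhi⟩ := Phi_surj a b hp H
      exact ⟨⟨⟨s, Nat.lt_succ_of_le hs⟩, ⟨t, Nat.lt_succ_of_le ht⟩, ⟨c, hc⟩⟩, hPhi⟩
  have hcard := Nat.card_congr (Equiv.ofBijective _ hbij)
  rw [← hcard]
  -- now compute card of Idx
  have h1 : Nat.card Idx = ∑ s : Fin (a+1), ∑ t : Fin (b+1),
      Nat.card {c : ZMod (p^b) // c.val < p^(t:ℕ) ∧ p^((t:ℕ) - min (t:ℕ) (a-(s:ℕ))) ∣ c.val} := by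
    simp only [Nat.card_eq_fintype_card, hIdx, Fintype.card_sigma]
  rw [h1]
  rw [Fin.sum_univ_eq_sum_range (fun s => ∑ t : Fin (b+1), Nat.card
      {c : ZMod (p^b) // c.val < p^(t:ℕ) ∧ p^((t:ℕ) - min (t:ℕ) (a-s)) ∣ c.val})]
  apply Finset.sum_congr rfl
  intro s hs
  rw [Fin.sum_univ_eq_sum_range (fun t => Nat.card
      {c : ZMod (p^b) // c.val < p^t ∧ p^(t - min t (a-s)) ∣ c.val})]
  apply Finset.sum_congr rfl
  intro t ht
  simp only [Finset.mem_range, Nat.lt_succ_iff] at ht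
  have hm : min t (a-s) ≤ t := min_le_left _ _
  have hsplit : p^t = p^(t - min t (a-s)) * p^(min t (a-s)) := by
    rw [← pow_add]; congr 1; omega
  rw [hsplit]
  exact card_count13 _ _ _ (by rw [← hsplit]; exact Nat.pow_le_pow_right hp.pos ht)
    (Nat.pow_pos hp.pos)
end

lemma innerSum13 (p : ℤ) (b j : ℕ) (hj : j ≤ b) :
    ∑ t ∈ Finset.range (b+1), p^(min t j)
      = (∑ t ∈ Finset.range j, p^t) + ((b+1-j : ℕ) : ℤ) * p^j := by
  rw [Finset.range_eq_Ico, ← Finset.sum_Ico_consecutive (fun t => p^(min t j))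
    (Nat.zero_le j) (by omega)]
  congr 1
  · rw [← Finset.range_eq_Ico]
    apply Finset.sum_congr rfl
    intro t ht
    simp only [Finset.mem_range] at ht
    rw [min_eq_left (le_of_lt ht)]
  · rw [Finset.sum_congr rfl (fun t ht => by
      simp only [Finset.mem_Ico] at ht
      rw [min_eq_right ht.1]), Finset.sum_const, Nat.card_Ico]
    simp [mul_comm]

lemma alg_sum13 (p : ℤ) (b : ℕ) : ∀ a : ℕ, a ≤ b →
    (p-1)^2 * (∑ j ∈ Finset.range (a+1), ∑ t ∈ Finset.range (b+1), p^(min t j))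
      = ((b:ℤ) - a + 1) * p^(a+2) - ((b:ℤ) - a - 1) * p^(a+1)
        - ((a:ℤ) + b + 3) * p + ((a:ℤ) + b + 1) := by
  intro a
  induction a with
  | zero =>
    intro _
    rw [Finset.sum_range_one, innerSum13 p b 0 (Nat.zero_le b)]
    simp only [Finset.range_zero, Finset.sum_empty, pow_zero, Nat.sub_zero, Nat.cast_add,
      Nat.cast_one, Nat.cast_zero]
    ring
  | succ a ih =>
    intro hab
    have ha : a ≤ b := by omega
    rw [Finset.sum_range_succ, mul_add, ih ha, innerSum13 p b (a+1) hab]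
    have hgeom : (∑ t ∈ Finset.range (a+1), p^t) * (p - 1) = p^(a+1) - 1 := geom_sum_mul p (a+1)
    have hcast : ((b + 1 - (a+1) : ℕ) : ℤ) = (b : ℤ) - a := by
      omega
    rw [hcast]
    have expand : (p-1)^2 * ((∑ t ∈ Finset.range (a+1), p^t) + ((b:ℤ) - a) * p^(a+1))
        = (p - 1) * ((∑ t ∈ Finset.range (a+1), p^t) * (p-1)) + ((b:ℤ) - a) * p^(a+1) * (p-1)^2 := by
      ring
    rw [expand, hgeom]
    push_cast
    ring

end Aux13

theorem stmt13 (p α₁ α₂ : ℕ) (hp : p.Prime) (h : α₁ ≤ α₂) :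
    ((p : ℤ) - 1) ^ 2 * Nat.card (AddSubgroup (ZMod (p ^ α₁) × ZMod (p ^ α₂))) =
      ((α₂ : ℤ) - α₁ + 1) * p ^ (α₁ + 2) - ((α₂ : ℤ) - α₁ - 1) * p ^ (α₁ + 1) -
        ((α₁ : ℤ) + α₂ + 3) * p + ((α₁ : ℤ) + α₂ + 1) := by
  rw [count_subgroups13 α₁ α₂ hp]
  push_cast
  have hrefl : ∑ s ∈ Finset.range (α₁+1), ∑ t ∈ Finset.range (α₂+1), (p:ℤ)^(min t (α₁-s))
      = ∑ j ∈ Finset.range (α₁+1), ∑ t ∈ Finset.range (α₂+1), (p:ℤ)^(min t j) := by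
    rw [← Finset.sum_range_reflect
      (fun j => ∑ t ∈ Finset.range (α₂+1), (p:ℤ)^(min t j)) (α₁+1)]
    apply Finset.sum_congr rfl
    intro s hs
    have : α₁ + 1 - 1 - s = α₁ - s := by omega
    rw [this]
  rw [hrefl]
  exact alg_sum13 (p:ℤ) α₂ α₁ h
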